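/- arXiv:2210.05873 — 3 statements merged into one kernel-verified Lean document; each statement's English description precedes it below -/
import Mathlib

section
/- From pointwise to uniform convergence in probability for monotone random functions (Polya-type lemma used in the proof of Lemma 2). For each n let F_n be a random function from [0, infinity) to [0,1] that is nonincreasing almost surely, and let G : [0, infinity) -> [0,1] be a deterministic continuous nonincreasing function with lim_{t -> infinity} G(t) = 0. If F_n(t) -> G(t) in probability for every t >= 0, then sup_{t >= 0} | F_n(t) - G(t) | -> 0 in probability. -/
open MeasureTheory Filter

/-- **From pointwise to uniform convergence in probability for monotone random functions**
(Pólya-type lemma).  For each `n` let `Fₙ` be a random function on `[0,∞)` with values in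
`[0,1]` that is nonincreasing almost surely, and let `G : [0,∞) → [0,1]` be a deterministic
continuous nonincreasing function with `G(t) → 0` as `t → ∞`.  If `Fₙ(t) → G(t)` in
probability for every `t ≥ 0`, then `sup_{t ≥ 0} |Fₙ(t) - G(t)| → 0` in probability. -/
theorem stmt_7
    {Ω : ℕ → Type*} [∀ n, MeasurableSpace (Ω n)] (μ : ∀ n, Measure (Ω n))
    [∀ n, IsProbabilityMeasure (μ n)]
    (F : ∀ n, Ω n → ℝ → ℝ)
    (hmono : ∀ n, ∀ᵐ ω ∂ μ n, ∀ s t : ℝ, 0 ≤ s → s ≤ t → F n ω t ≤ F n ω s)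
    (hrange : ∀ n, ∀ᵐ ω ∂ μ n, ∀ t : ℝ, 0 ≤ t → F n ω t ∈ Set.Icc (0:ℝ) 1)
    (G : ℝ → ℝ)
    (hGcont : ContinuousOn G (Set.Ici 0))
    (hGmono : AntitoneOn G (Set.Ici 0))
    (hGrange : ∀ t : ℝ, 0 ≤ t → G t ∈ Set.Icc (0:ℝ) 1)
    (hGlim : Tendsto G atTop (nhds 0))
    (hpt : ∀ t : ℝ, 0 ≤ t → ∀ ε > (0:ℝ),
      Tendsto (fun n => μ n {ω | ε < |F n ω t - G t|}) atTop (nhds 0)) :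
    ∀ ε > (0:ℝ),
      Tendsto (fun n => μ n {ω | ε < ⨆ t : Set.Ici (0:ℝ), |F n ω t - G t|})
        atTop (nhds 0) := by
  intro ε hε
  set ε' : ℝ := ε / 2 with hε'def
  have hε' : 0 < ε' := by positivity
  -- choose tail point T
  have hTex : ∃ T : ℝ, 0 ≤ T ∧ G T < ε' := by
    have h1 : ∀ᶠ t in atTop, G t < ε' := hGlim.eventually (gt_mem_nhds hε')
    obtain ⟨T, hT1, hT2⟩ := (h1.and (eventually_ge_atTop (0:ℝ))).exists
    exact ⟨T, hT2, hT1⟩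
  obtain ⟨T, hT0, hTε⟩ := hTex
  -- uniform continuity on [0,T]
  have hucont : UniformContinuousOn G (Set.Icc 0 T) :=
    isCompact_Icc.uniformContinuousOn_of_continuous (hGcont.mono (fun x hx => hx.1))
  rw [Metric.uniformContinuousOn_iff] at hucont
  obtain ⟨δ, hδ, hδ'⟩ := hucont ε' hε'
  -- grid size
  obtain ⟨k0, hk0⟩ := exists_nat_gt (T / δ)
  set k : ℕ := k0 + 1 with hkdef
  have hkpos : (0:ℝ) < (k : ℝ) := by positivity
  have hTk : T / (k : ℝ) < δ := by
    have h1 : T / δ < (k : ℝ) := lt_of_lt_of_le hk0 (by exact_mod_cast Nat.le_succ k0)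
    rw [div_lt_iff₀ hkpos]
    calc T = (T / δ) * δ := by field_simp
    _ < (k : ℝ) * δ := by exact mul_lt_mul_of_pos_right h1 hδ
    _ = δ * (k : ℝ) := by ring
  -- grid points
  set pts : ℕ → ℝ := fun i => (i : ℝ) * T / (k : ℝ) with hptsdef
  have hpts0 : ∀ i, 0 ≤ pts i := fun i => by
    have : (0:ℝ) ≤ (i:ℝ) := Nat.cast_nonneg i
    positivity
  have hptsk : pts k = T := by rw [hptsdef]; exact mul_div_cancel_left₀ T hkpos.ne'
  have hptsleT : ∀ i, i ≤ k → pts i ≤ T := by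
    intro i hi
    rw [hptsdef]
    rw [div_le_iff₀ hkpos]
    have : (i:ℝ) ≤ (k:ℝ) := by exact_mod_cast hi
    nlinarith
  have hG0 : ∀ t : ℝ, 0 ≤ t → 0 ≤ G t := fun t ht => (hGrange t ht).1
  -- bad sets
  set bad : ∀ n, Set (Ω n) := fun n => {ω | ¬ ((∀ s t : ℝ, 0 ≤ s → s ≤ t → F n ω t ≤ F n ω s)
      ∧ (∀ t : ℝ, 0 ≤ t → F n ω t ∈ Set.Icc (0:ℝ) 1))} with hbaddef
  have hbad : ∀ n, μ n (bad n) = 0 := fun n => ae_iff.mp ((hmono n).and (hrange n))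
  -- grid deviation sets
  set S : ℕ → ∀ n, Set (Ω n) := fun i n => {ω | ε' < |F n ω (pts i) - G (pts i)|} with hSdef
  -- key inclusion
  have key : ∀ n, {ω | ε < ⨆ t : Set.Ici (0:ℝ), |F n ω t - G t|} ⊆
      (⋃ i ∈ Finset.range (k+1), S i n) ∪ bad n := by
    intro n ω hω
    by_contra hc
    simp only [Set.mem_union, Set.mem_iUnion, not_or, not_exists] at hc
    obtain ⟨hc1, hc2⟩ := hc
    have hgrid : ∀ i, i ≤ k → |F n ω (pts i) - G (pts i)| ≤ ε' := by
      intro i hi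
      have h := hc1 i (Finset.mem_range.mpr (Nat.lt_succ_of_le hi))
      simp only [S, Set.mem_setOf_eq, not_lt] at h
      exact h
    rw [hbaddef] at hc2
    simp only [Set.mem_setOf_eq, not_not] at hc2
    obtain ⟨hmω, hrω⟩ := hc2
    -- pointwise bound
    have habs : ∀ t : ℝ, 0 ≤ t → |F n ω t - G t| ≤ ε := by
      intro t ht
      rcases le_or_gt T t with hTt | htT
      · -- tail case
        have h1 : F n ω t ≤ F n ω T := hmω T t hT0 hTt
        have h2 : |F n ω T - G T| ≤ ε' := by have := hgrid k le_rfl; rwa [hptsk] at this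
        rw [abs_le] at h2 ⊢
        have h3 : G t ≤ G T := hGmono (Set.mem_Ici.mpr hT0) (Set.mem_Ici.mpr ht) hTt
        have h4 : 0 ≤ G t := hG0 t ht
        have h5 : 0 ≤ F n ω t := (hrω t ht).1
        obtain ⟨h2a, h2b⟩ := h2
        simp only [hε'def] at *
        constructor <;> linarith
      · -- interior case, t < T so T > 0
        have hTpos : 0 < T := lt_of_le_of_lt ht htT
        set i : ℕ := ⌊t * (k:ℝ) / T⌋₊ with hidef
        have hq0 : 0 ≤ t * (k:ℝ) / T := by positivity
        have hi_le : (i:ℝ) ≤ t * (k:ℝ) / T := Nat.floor_le hq0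
        have hi_lt : t * (k:ℝ) / T < (i:ℝ) + 1 := Nat.lt_floor_add_one _
        have hik : i < k := by
          have h1 : t * (k:ℝ) / T < (k:ℝ) := by
            rw [div_lt_iff₀ hTpos]
            nlinarith
          exact_mod_cast lt_of_le_of_lt hi_le h1
        have hik1 : i + 1 ≤ k := hik
        have hlo : pts i ≤ t := by
          rw [hptsdef, div_le_iff₀ hkpos]
          rw [le_div_iff₀ hTpos] at hi_le
          linarith
        have hhi : t < pts (i+1) := by
          rw [hptsdef, lt_div_iff₀ hkpos]
          rw [div_lt_iff₀ hTpos] at hi_lt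
          push_cast
          push_cast at hi_lt
          nlinarith
        have hdiff : pts (i+1) - pts i = T / (k:ℝ) := by
          rw [hptsdef]; push_cast; field_simp; ring
        have hmemt : t ∈ Set.Icc (0:ℝ) T := ⟨ht, le_of_lt htT⟩
        have hmemi : pts i ∈ Set.Icc (0:ℝ) T := ⟨hpts0 i, hptsleT i (le_of_lt hik)⟩
        have hmemi1 : pts (i+1) ∈ Set.Icc (0:ℝ) T := ⟨hpts0 (i+1), hptsleT (i+1) hik1⟩
        have hd1 : |G (pts i) - G t| < ε' := by
          have : dist (pts i) t < δ := by
            rw [Real.dist_eq, abs_of_nonpos (by linarith)]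
            linarith [hdiff, hTk, hhi]
          have := hδ' (pts i) hmemi t hmemt this
          rwa [Real.dist_eq] at this
        have hd2 : |G (pts (i+1)) - G t| < ε' := by
          have : dist (pts (i+1)) t < δ := by
            rw [Real.dist_eq, abs_of_nonneg (by linarith)]
            linarith [hdiff, hTk, hlo]
          have := hδ' (pts (i+1)) hmemi1 t hmemt this
          rwa [Real.dist_eq] at this
        have hg1 : |F n ω (pts i) - G (pts i)| ≤ ε' := hgrid i (le_of_lt hik)
        have hg2 : |F n ω (pts (i+1)) - G (pts (i+1))| ≤ ε' := hgrid (i+1) hik1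
        have hF1 : F n ω t ≤ F n ω (pts i) := hmω (pts i) t (hpts0 i) hlo
        have hF2 : F n ω (pts (i+1)) ≤ F n ω t := hmω t (pts (i+1)) ht (le_of_lt hhi)
        rw [abs_le] at hg1 hg2 ⊢
        rw [abs_lt] at hd1 hd2
        simp only [hε'def] at *
        constructor <;> linarith
    -- conclude sup ≤ ε
    have hsup : (⨆ t : Set.Ici (0:ℝ), |F n ω t - G t|) ≤ ε := by
      haveI : Nonempty (Set.Ici (0:ℝ)) := Set.nonempty_Ici.to_subtype
      exact ciSup_le (fun t => habs t.1 t.2)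
    exact absurd hω (by simp only [Set.mem_setOf_eq, not_lt]; exact hsup)
  -- measure bound
  have hbound : ∀ n, μ n {ω | ε < ⨆ t : Set.Ici (0:ℝ), |F n ω t - G t|} ≤
      ∑ i ∈ Finset.range (k+1), μ n (S i n) := by
    intro n
    calc μ n {ω | ε < ⨆ t : Set.Ici (0:ℝ), |F n ω t - G t|}
        ≤ μ n ((⋃ i ∈ Finset.range (k+1), S i n) ∪ bad n) := measure_mono (key n)
      _ ≤ μ n (⋃ i ∈ Finset.range (k+1), S i n) + μ n (bad n) := measure_union_le _ _
      _ = μ n (⋃ i ∈ Finset.range (k+1), S i n) := by rw [hbad n, add_zero]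
      _ ≤ ∑ i ∈ Finset.range (k+1), μ n (S i n) := measure_biUnion_finset_le _ _
  -- sum tends to 0
  have hsumt : Tendsto (fun n => ∑ i ∈ Finset.range (k+1), μ n (S i n)) atTop (nhds 0) := by
    have h := tendsto_finset_sum (Finset.range (k+1))
      (fun i _ => hpt (pts i) (hpts0 i) ε' hε')
    simpa using h
  exact tendsto_of_tendsto_of_tendsto_of_le_of_le tendsto_const_nhds hsumt
    (fun n => zero_le) hbound
end

section
/- Slice-covariance lower bound under the inverse regression model (claim proved in Remark 2). Suppose the covariate is generated as x = mu + Gamma * nu_y + sigma * epsilon, where mu in R^p, Gamma in R^{p x d}, nu_y is an R^d-valued measurable function of the random variable y, sigma > 0, and epsilon is an R^p-valued random vector with mean zero, finite second moments, and independent of y. Then for any measurable set P in R with p_h = P(y in P), the covariance matrix of the truncated vector x * 1(y in P) satisfies Cov( x 1(y in P), x 1(y in P) ) >= p_h * sigma^2 * Cov(epsilon, epsilon) in the Loewner (positive semidefinite) order. -/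
open MeasureTheory ProbabilityTheory
open scoped Classical

lemma l2_mul_integrable {Ω : Type*} [MeasurableSpace Ω] {μ : Measure Ω} {f g : Ω → ℝ}
    (hf : MemLp f 2 μ) (hg : MemLp g 2 μ) : Integrable (fun ω => f ω * g ω) μ := by
  have h := hg.smul (r := 1) hf
  rw [memLp_one_iff_integrable] at h
  simpa [Pi.smul_apply, smul_eq_mul, mul_comm, Pi.mul_def] using h

open Matrix in
lemma cov_psd {Ω : Type*} [MeasurableSpace Ω] (μ : Measure Ω) [IsProbabilityMeasure μ] {p : ℕ}
    (f : Fin p → Ω → ℝ) (hf : ∀ j, MemLp (f j) 2 μ) :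
    Matrix.PosSemidef (Matrix.of fun j k =>
      (∫ ω, f j ω * f k ω ∂μ) - (∫ ω, f j ω ∂μ) * (∫ ω, f k ω ∂μ)) := by
  rw [Matrix.posSemidef_iff_dotProduct_mulVec]
  constructor
  · ext j k
    simp [Matrix.conjTranspose_apply, mul_comm]
  · intro v
    set g : Ω → ℝ := fun ω => ∑ j, v j * f j ω with hg
    have hgL2 : MemLp g 2 μ := by
      exact memLp_finset_sum _ fun j _ => (hf j).const_mul (v j)
    have hgint : Integrable g μ := hgL2.integrable one_le_two
    have hintjk : ∀ j k : Fin p, Integrable (fun ω => f j ω * f k ω) μ :=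
      fun j k => l2_mul_integrable (hf j) (hf k)
    have hsq : (fun ω => g ω * g ω) = fun ω => ∑ j, ∑ k, (v j * v k) * (f j ω * f k ω) := by
      funext ω
      rw [hg, Finset.sum_mul_sum]
      refine Finset.sum_congr rfl fun j _ => Finset.sum_congr rfl fun k _ => by ring
    have hintg2 : ∫ ω, g ω * g ω ∂μ = ∑ j, ∑ k, (v j * v k) * ∫ ω, f j ω * f k ω ∂μ := by
      rw [hsq, integral_finset_sum]
      · refine Finset.sum_congr rfl fun j _ => ?_
        rw [integral_finset_sum]
        · exact Finset.sum_congr rfl fun k _ => integral_const_mul _ _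
        · intro k _; exact (hintjk j k).const_mul _
      · intro j _
        exact integrable_finset_sum _ fun k _ => (hintjk j k).const_mul _
    have hintg : ∫ ω, g ω ∂μ = ∑ j, v j * ∫ ω, f j ω ∂μ := by
      rw [hg, integral_finset_sum]
      · exact Finset.sum_congr rfl fun j _ => integral_const_mul _ _
      · intro j _; exact ((hf j).integrable one_le_two).const_mul _
    have key : v ⬝ᵥ ((Matrix.of fun j k =>
        (∫ ω, f j ω * f k ω ∂μ) - (∫ ω, f j ω ∂μ) * (∫ ω, f k ω ∂μ)) *ᵥ v)
        = (∫ ω, g ω * g ω ∂μ) - (∫ ω, g ω ∂μ) * (∫ ω, g ω ∂μ) := by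
      simp only [dotProduct, Matrix.mulVec, Matrix.of_apply]
      rw [hintg2, hintg, Finset.sum_mul_sum]
      simp only [Finset.mul_sum, Finset.sum_mul]
      rw [← Finset.sum_sub_distrib]
      refine Finset.sum_congr rfl fun j _ => ?_
      rw [← Finset.sum_sub_distrib]
      exact Finset.sum_congr rfl fun k _ => by ring
    simp only [star_trivial]
    rw [key]
    set c := ∫ ω, g ω ∂μ with hc
    have h1 : Integrable (fun ω => g ω * g ω) μ := l2_mul_integrable hgL2 hgL2
    have hge : ∫ ω, (g ω - c) * (g ω - c) ∂μ = (∫ ω, g ω * g ω ∂μ) - c * c := by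
      have e : (fun ω => (g ω - c) * (g ω - c))
          = fun ω => g ω * g ω - ((2 * c) * g ω - c * c) := by funext ω; ring
      have hi1 : Integrable (fun ω => 2 * c * g ω) μ := hgint.const_mul _
      have hi0 : Integrable (fun _ : Ω => c * c) μ := integrable_const _
      have hi2 : Integrable (fun ω => 2 * c * g ω - c * c) μ := hi1.sub hi0
      rw [e, integral_sub h1 hi2, integral_sub hi1 hi0, integral_const_mul, integral_const]
      simp [← hc]
      ring
    have : 0 ≤ ∫ ω, (g ω - c) * (g ω - c) ∂μ :=
      integral_nonneg fun ω => mul_self_nonneg _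
    linarith [hge ▸ this]

/-- **Slice-covariance lower bound under the inverse regression model.**
Suppose `x = μv + Γ νy(y) + σ ε` where `ε` has mean zero, finite second moments, and is
independent of `y`.  Then for any measurable slice `P ⊆ ℝ` with `p_h = P(y ∈ P)`,
`Cov(x 1(y ∈ P)) ⪰ p_h σ² Cov(ε)` in the Loewner order. -/
theorem stmt_9
    {Ω : Type*} [MeasurableSpace Ω] (μ : Measure Ω) [IsProbabilityMeasure μ]
    {p d : ℕ}
    (y : Ω → ℝ) (hy : Measurable y)
    (ν : ℝ → Fin d → ℝ) (hν : Measurable ν)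
    (ε : Ω → Fin p → ℝ) (hε : Measurable ε)
    (μv : Fin p → ℝ) (Γ : Matrix (Fin p) (Fin d) ℝ) (σ : ℝ) (hσ : 0 < σ)
    (hεmean : ∀ j, ∫ ω, ε ω j ∂μ = 0)
    (hεL2 : ∀ j, MemLp (fun ω => ε ω j) 2 μ)
    (hindep : IndepFun ε y μ)
    (x : Ω → Fin p → ℝ)
    (hx : ∀ ω j, x ω j = μv j + Γ.mulVec (ν (y ω)) j + σ * ε ω j)
    (P : Set ℝ) (hP : MeasurableSet P)
    (hxL2 : ∀ j, MemLp (fun ω => if y ω ∈ P then x ω j else 0) 2 μ)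
    (ph : ℝ) (hph : ph = (μ {ω | y ω ∈ P}).toReal) :
    Matrix.PosSemidef
      ((Matrix.of fun j k =>
          (∫ ω, (if y ω ∈ P then x ω j else 0) * (if y ω ∈ P then x ω k else 0) ∂μ)
            - (∫ ω, (if y ω ∈ P then x ω j else 0) ∂μ)
              * (∫ ω, (if y ω ∈ P then x ω k else 0) ∂μ))
        - (ph * σ ^ 2) •
          (Matrix.of fun j k =>
            (∫ ω, ε ω j * ε ω k ∂μ)
              - (∫ ω, ε ω j ∂μ) * (∫ ω, ε ω k ∂μ))) := by
  set x1 : Fin p → Ω → ℝ := fun j ω => if y ω ∈ P then x ω j else 0 with hx1def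
  set a : Fin p → Ω → ℝ := fun j ω => if y ω ∈ P then μv j + Γ.mulVec (ν (y ω)) j else 0 with hadef
  set b : Fin p → Ω → ℝ := fun j ω => if y ω ∈ P then ε ω j else 0 with hbdef
  have hyP : MeasurableSet (y ⁻¹' P) := hy hP
  -- pointwise decomposition
  have hdec : ∀ j ω, x1 j ω = a j ω + σ * b j ω := by
    intro j ω
    simp only [hx1def, hadef, hbdef]
    split_ifs with h
    · rw [hx ω j]
    · ring
  -- L2 facts
  have hbL2 : ∀ j, MemLp (b j) 2 μ := by
    intro j
    have h := (hεL2 j).indicator hyP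
    refine h.ae_eq (Filter.Eventually.of_forall fun ω => ?_)
    simp [hbdef, Set.indicator_apply, Set.mem_preimage]
  have haL2 : ∀ j, MemLp (a j) 2 μ := by
    intro j
    have h : MemLp (fun ω => x1 j ω - σ * b j ω) 2 μ :=
      (hxL2 j).sub ((hbL2 j).const_mul σ)
    refine h.ae_eq (Filter.Eventually.of_forall fun ω => ?_)
    rw [hdec j ω]; ring
  have haint : ∀ j, Integrable (a j) μ := fun j => (haL2 j).integrable one_le_two
  have hbint : ∀ j, Integrable (b j) μ := fun j => (hbL2 j).integrable one_le_two
  have hεint : ∀ j, Integrable (fun ω => ε ω j) μ := fun j => (hεL2 j).integrable one_le_two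
  -- indicator of the slice, as a function of y
  set χ : ℝ → ℝ := fun t => if t ∈ P then (1 : ℝ) else 0 with hχdef
  have hχmeas : Measurable χ := Measurable.ite hP measurable_const measurable_const
  have hχyint : Integrable (fun ω => χ (y ω)) μ := by
    have h : Integrable ((y ⁻¹' P).indicator fun _ => (1 : ℝ)) μ :=
      (integrable_const 1).indicator hyP
    refine h.congr (Filter.Eventually.of_forall fun ω => ?_)
    simp [hχdef, Set.indicator_apply, Set.mem_preimage]
  have hχyval : ∫ ω, χ (y ω) ∂μ = ph := by
    rw [hph]
    have : (fun ω => χ (y ω)) = (y ⁻¹' P).indicator (1 : Ω → ℝ) := by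
      funext ω; simp [hχdef, Set.indicator_apply, Set.mem_preimage]
    rw [this, integral_indicator_one hyP]
    rfl
  -- ψ j : the deterministic slice function of y giving a j
  set ψ : Fin p → ℝ → ℝ :=
    fun j t => if t ∈ P then μv j + Γ.mulVec (ν t) j else 0 with hψdef
  have hψmeas : ∀ j, Measurable (ψ j) := by
    intro j
    refine Measurable.ite hP (measurable_const.add ?_) measurable_const
    have : (fun t => Γ.mulVec (ν t) j) = fun t => ∑ i, Γ j i * ν t i := by
      funext t; simp [Matrix.mulVec, dotProduct]
    rw [this]
    exact Finset.measurable_sum _ fun i _ =>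
      measurable_const.mul ((measurable_pi_apply i).comp hν)
  have haψ : ∀ j ω, a j ω = ψ j (y ω) := fun j ω => rfl
  -- ∫ b j = 0
  have hbmean : ∀ j, ∫ ω, b j ω ∂μ = 0 := by
    intro j
    have hprod : (fun ω => b j ω) = (χ ∘ y) * ((fun v : Fin p → ℝ => v j) ∘ ε) := by
      funext ω; simp only [hbdef, hχdef, Function.comp, Pi.mul_apply]
      split_ifs <;> simp
    have hInd : IndepFun (χ ∘ y) ((fun v : Fin p → ℝ => v j) ∘ ε) μ :=
      hindep.symm.comp hχmeas (measurable_pi_apply j)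
    rw [hprod, hInd.integral_mul_eq_mul_integral hχyint.aestronglyMeasurable (hεint j).aestronglyMeasurable]
    have h2 : integral μ ((fun v : Fin p → ℝ => v j) ∘ ε) = 0 := hεmean j
    rw [h2, mul_zero]
  -- ∫ a j * b k = 0
  have habzero : ∀ j k, ∫ ω, a j ω * b k ω ∂μ = 0 := by
    intro j k
    have hprod : (fun ω => a j ω * b k ω)
        = (ψ j ∘ y) * ((fun v : Fin p → ℝ => v k) ∘ ε) := by
      funext ω
      simp only [hadef, hbdef, hψdef, Function.comp, Pi.mul_apply]
      split_ifs <;> simp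
    have hInd : IndepFun (ψ j ∘ y) ((fun v : Fin p → ℝ => v k) ∘ ε) μ :=
      hindep.symm.comp (hψmeas j) (measurable_pi_apply k)
    have hψint : Integrable (ψ j ∘ y) μ := haint j
    rw [hprod, hInd.integral_mul_eq_mul_integral hψint.aestronglyMeasurable (hεint k).aestronglyMeasurable]
    have h2 : integral μ ((fun v : Fin p → ℝ => v k) ∘ ε) = 0 := hεmean k
    rw [h2, mul_zero]
  -- ∫ b j * b k = ph * ∫ ε j ε k
  have hbb : ∀ j k, ∫ ω, b j ω * b k ω ∂μ = ph * ∫ ω, ε ω j * ε ω k ∂μ := by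
    intro j k
    have hprod : (fun ω => b j ω * b k ω)
        = (χ ∘ y) * ((fun v : Fin p → ℝ => v j * v k) ∘ ε) := by
      funext ω
      simp only [hbdef, hχdef, Function.comp, Pi.mul_apply]
      split_ifs <;> simp
    have hInd : IndepFun (χ ∘ y) ((fun v : Fin p → ℝ => v j * v k) ∘ ε) μ :=
      hindep.symm.comp hχmeas ((measurable_pi_apply j).mul (measurable_pi_apply k))
    have hεε : Integrable (fun ω => ε ω j * ε ω k) μ := l2_mul_integrable (hεL2 j) (hεL2 k)
    rw [hprod, hInd.integral_mul_eq_mul_integral hχyint.aestronglyMeasurable hεε.aestronglyMeasurable]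
    have h1 : integral μ (χ ∘ y) = ph := hχyval
    have h2 : integral μ ((fun v : Fin p → ℝ => v j * v k) ∘ ε)
        = ∫ ω, ε ω j * ε ω k ∂μ := rfl
    rw [h1, h2]
  -- ∫ x1 j = ∫ a j
  have hEj : ∀ j, ∫ ω, x1 j ω ∂μ = ∫ ω, a j ω ∂μ := by
    intro j
    have : (fun ω => x1 j ω) = fun ω => a j ω + σ * b j ω := funext fun ω => hdec j ω
    rw [this, integral_add (haint j) ((hbint j).const_mul σ), integral_const_mul, hbmean j]
    ring
  -- ∫ x1 j * x1 k
  have hEjk : ∀ j k, ∫ ω, x1 j ω * x1 k ω ∂μ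
      = (∫ ω, a j ω * a k ω ∂μ) + σ ^ 2 * (ph * ∫ ω, ε ω j * ε ω k ∂μ) := by
    intro j k
    have hexp : (fun ω => x1 j ω * x1 k ω) = fun ω =>
        a j ω * a k ω + σ * (a j ω * b k ω) + σ * (a k ω * b j ω)
          + σ ^ 2 * (b j ω * b k ω) := by
      funext ω; rw [hdec j ω, hdec k ω]; ring
    have i1 : Integrable (fun ω => a j ω * a k ω) μ := l2_mul_integrable (haL2 j) (haL2 k)
    have i2 : Integrable (fun ω => σ * (a j ω * b k ω)) μ :=
      (l2_mul_integrable (haL2 j) (hbL2 k)).const_mul σ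
    have i3 : Integrable (fun ω => σ * (a k ω * b j ω)) μ :=
      (l2_mul_integrable (haL2 k) (hbL2 j)).const_mul σ
    have i4 : Integrable (fun ω => σ ^ 2 * (b j ω * b k ω)) μ :=
      (l2_mul_integrable (hbL2 j) (hbL2 k)).const_mul _
    have i12 : Integrable (fun ω => a j ω * a k ω + σ * (a j ω * b k ω)) μ := i1.add i2
    have i123 : Integrable (fun ω =>
        a j ω * a k ω + σ * (a j ω * b k ω) + σ * (a k ω * b j ω)) μ := i12.add i3
    rw [hexp, integral_add i123 i4, integral_add i12 i3,
      integral_add i1 i2, integral_const_mul, integral_const_mul, integral_const_mul,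
      habzero j k, habzero k j, hbb j k]
    ring
  -- assemble
  have hmat : ((Matrix.of fun j k =>
          (∫ ω, x1 j ω * x1 k ω ∂μ) - (∫ ω, x1 j ω ∂μ) * (∫ ω, x1 k ω ∂μ))
        - (ph * σ ^ 2) •
          (Matrix.of fun j k =>
            (∫ ω, ε ω j * ε ω k ∂μ) - (∫ ω, ε ω j ∂μ) * (∫ ω, ε ω k ∂μ)))
      = Matrix.of fun j k =>
          (∫ ω, a j ω * a k ω ∂μ) - (∫ ω, a j ω ∂μ) * (∫ ω, a k ω ∂μ) := by
    ext j k
    simp only [Matrix.sub_apply, Matrix.smul_apply, Matrix.of_apply, smul_eq_mul]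
    rw [hEjk j k, hEj j, hEj k, hεmean j, hεmean k]
    ring
  exact hmat ▸ cov_psd μ a haL2
end

section
/- Population slice coefficients lie in the central subspace under the linearity condition (the identity E[f(y) phi(y)] in S_{y|x} used to justify the SIR/OLS formulation). Let x be a centered random vector in R^p with invertible covariance matrix Sigma, let B in R^{p x d} with B^T Sigma B invertible, and let y be a real random variable such that y and x are conditionally independent given B^T x. Assume the linearity condition: E[ x | B^T x ] = Sigma B (B^T Sigma B)^{-1} B^T x almost surely. Then for every bounded measurable function f : R -> R, the vector Sigma^{-1} E[ x f(y) ] lies in the column space of B. -/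
open MeasureTheory ProbabilityTheory Matrix

open Filter Set Topology

set_option linter.unusedSectionVars false

section AuxCI

variable {Ω : Type*} {m' mΩ : MeasurableSpace Ω}

private lemma integrable_of_bound' (μ : Measure Ω) [IsFiniteMeasure μ] {h : Ω → ℝ}
    (hmeas : Measurable h) (C : ℝ) (hC : ∀ ω, |h ω| ≤ C) : Integrable h μ :=
  (memLp_top_of_bound hmeas.aestronglyMeasurable C
    (Eventually.of_forall fun ω => by simpa [Real.norm_eq_abs] using hC ω)).integrable le_top

private lemma int_mul_bdd (μ : Measure Ω) {w : Ω → ℝ} (hw : Integrable w μ) {e : Ω → ℝ}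
    (he : Measurable e) {C : ℝ} (heb : ∀ ω, |e ω| ≤ C) :
    Integrable (fun ω => w ω * e ω) μ := by
  have h := hw.bdd_mul (f := e) he.aestronglyMeasurable
    (Eventually.of_forall fun ω => by simpa [Real.norm_eq_abs] using heb ω)
  simpa [mul_comm] using h

/-- pull-out identity : `∫ E[g|m'] h = ∫ E[g|m'] E[h|m']` for bounded measurable `h`. -/
private lemma aux_pull (hm' : m' ≤ mΩ) (μ : Measure Ω)
    [IsProbabilityMeasure μ] {h : Ω → ℝ}
    (hmeas : Measurable h) {C : ℝ} (hC : ∀ ω, |h ω| ≤ C) (g : Ω → ℝ) :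
    ∫ ω, (μ[g|m']) ω * h ω ∂μ = ∫ ω, (μ[g|m']) ω * (μ[h|m']) ω ∂μ := by
  have hhint : Integrable h μ := integrable_of_bound' μ hmeas C hC
  have hprod : Integrable ((μ[g|m']) * h) μ := int_mul_bdd μ integrable_condExp hmeas hC
  have h1 : ∫ ω, ((μ[g|m']) * h) ω ∂μ = ∫ ω, (μ[(μ[g|m']) * h|m']) ω ∂μ :=
    (integral_condExp (μ := μ) (f := (μ[g|m']) * h) hm').symm
  have h2 : μ[(μ[g|m']) * h|m'] =ᵐ[μ] (μ[g|m']) * μ[h|m'] :=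
    condExp_mul_of_stronglyMeasurable_left stronglyMeasurable_condExp hprod hhint
  calc ∫ ω, (μ[g|m']) ω * h ω ∂μ = ∫ ω, ((μ[g|m']) * h) ω ∂μ := rfl
    _ = ∫ ω, (μ[(μ[g|m']) * h|m']) ω ∂μ := h1
    _ = ∫ ω, ((μ[g|m']) * μ[h|m']) ω ∂μ := integral_congr_ae h2
    _ = ∫ ω, (μ[g|m']) ω * (μ[h|m']) ω ∂μ := rfl

variable [StandardBorelSpace Ω] {α β : Type*} [MeasurableSpace α] [MeasurableSpace β]
  (μ : Measure Ω) [IsProbabilityMeasure μ]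
  {x : Ω → α} {y : Ω → β} {hm' : m' ≤ mΩ}

/-- Step 1: indicator × indicator. -/
private lemma step1 (hx : Measurable x) (hy : Measurable y) (hCI : CondIndepFun m' hm' y x μ)
    {s : Set α} (hs : MeasurableSet s) {t : Set β} (ht : MeasurableSet t) :
    ∫ ω, (x ⁻¹' s).indicator (fun _ => (1 : ℝ)) ω * (y ⁻¹' t).indicator (fun _ => (1 : ℝ)) ω ∂μ
      = ∫ ω, (μ[(x ⁻¹' s).indicator (fun _ => (1 : ℝ))|m']) ω
          * (y ⁻¹' t).indicator (fun _ => (1 : ℝ)) ω ∂μ := by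
  have hA : MeasurableSet (x ⁻¹' s) := hx hs
  have hBt : MeasurableSet (y ⁻¹' t) := hy ht
  have hci := (condIndepFun_iff_condExp_inter_preimage_eq_mul (hm' := hm') hy hx).mp hCI t s ht hs
  have hindmul : (fun ω => (x ⁻¹' s).indicator (fun _ => (1 : ℝ)) ω
      * (y ⁻¹' t).indicator (fun _ => (1 : ℝ)) ω)
      = (y ⁻¹' t ∩ x ⁻¹' s).indicator (fun _ => (1 : ℝ)) := by
    funext ω
    by_cases h1 : ω ∈ x ⁻¹' s <;> by_cases h2 : ω ∈ y ⁻¹' t <;>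
      simp [Set.indicator_apply, h1, h2]
  have hb1 : ∀ ω, |(y ⁻¹' t).indicator (fun _ => (1 : ℝ)) ω| ≤ 1 := by
    intro ω; by_cases h : ω ∈ y ⁻¹' t <;> simp [Set.indicator_apply, h]
  have hmeas1 : Measurable ((y ⁻¹' t).indicator (fun _ => (1 : ℝ))) :=
    measurable_const.indicator hBt
  calc ∫ ω, (x ⁻¹' s).indicator (fun _ => (1 : ℝ)) ω
        * (y ⁻¹' t).indicator (fun _ => (1 : ℝ)) ω ∂μ
      = ∫ ω, (y ⁻¹' t ∩ x ⁻¹' s).indicator (fun _ => (1 : ℝ)) ω ∂μ := by rw [hindmul]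
    _ = ∫ ω, (μ[(y ⁻¹' t ∩ x ⁻¹' s).indicator (fun _ => (1 : ℝ))|m']) ω ∂μ :=
        (integral_condExp (μ := μ)
          (f := (y ⁻¹' t ∩ x ⁻¹' s).indicator (fun _ => (1 : ℝ))) hm').symm
    _ = ∫ ω, (μ⟦y ⁻¹' t|m'⟧) ω * (μ⟦x ⁻¹' s|m'⟧) ω ∂μ := integral_congr_ae hci
    _ = ∫ ω, (μ[(x ⁻¹' s).indicator (fun _ => (1 : ℝ))|m']) ω
          * (μ[(y ⁻¹' t).indicator (fun _ => (1 : ℝ))|m']) ω ∂μ := by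
        apply integral_congr_ae; filter_upwards with ω using mul_comm _ _
    _ = ∫ ω, (μ[(x ⁻¹' s).indicator (fun _ => (1 : ℝ))|m']) ω
          * (y ⁻¹' t).indicator (fun _ => (1 : ℝ)) ω ∂μ :=
        (aux_pull hm' μ hmeas1 hb1 _).symm

/-- Step 2: simple function of `x` × indicator of `y`. -/
private lemma step2 (hx : Measurable x) (hy : Measurable y) (hCI : CondIndepFun m' hm' y x μ)
    (φ : SimpleFunc α ℝ) {t : Set β} (ht : MeasurableSet t) :
    ∫ ω, φ (x ω) * (y ⁻¹' t).indicator (fun _ => (1 : ℝ)) ω ∂μ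
      = ∫ ω, (μ[fun ω => φ (x ω)|m']) ω * (y ⁻¹' t).indicator (fun _ => (1 : ℝ)) ω ∂μ := by
  have hBt : MeasurableSet (y ⁻¹' t) := hy ht
  set e : Ω → ℝ := (y ⁻¹' t).indicator (fun _ => (1 : ℝ)) with he_def
  have hb1 : ∀ ω, |e ω| ≤ 1 := by
    intro ω; by_cases h : ω ∈ y ⁻¹' t <;> simp [he_def, Set.indicator_apply, h]
  have hmeas1 : Measurable e := measurable_const.indicator hBt
  induction φ using SimpleFunc.induction with
  | @const c s hs =>
      have hcoe : ∀ a, (SimpleFunc.piecewise s hs (SimpleFunc.const α c)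
          (SimpleFunc.const α 0)) a = c * (s.indicator (fun _ => (1 : ℝ)) a) := by
        intro a; by_cases h : a ∈ s <;>
          simp [SimpleFunc.piecewise_apply, Set.indicator_apply, h]
      have hxcoe : ∀ ω, (SimpleFunc.piecewise s hs (SimpleFunc.const α c)
          (SimpleFunc.const α 0)) (x ω)
          = c * (x ⁻¹' s).indicator (fun _ => (1 : ℝ)) ω := by
        intro ω; rw [hcoe]; by_cases h : x ω ∈ s <;> simp [Set.indicator_apply, h]
      have hxcoe2 : (fun ω => (SimpleFunc.piecewise s hs (SimpleFunc.const α c)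
          (SimpleFunc.const α 0)) (x ω))
          = fun ω => c * (x ⁻¹' s).indicator (fun _ => (1 : ℝ)) ω := funext hxcoe
      simp only [hxcoe, hxcoe2]
      have hce : μ[fun ω => c * (x ⁻¹' s).indicator (fun _ => (1 : ℝ)) ω|m']
          =ᵐ[μ] fun ω => c * (μ[(x ⁻¹' s).indicator (fun _ => (1 : ℝ))|m']) ω := by
        have := condExp_smul (m := m') (m₀ := mΩ) (μ := μ) c
          ((x ⁻¹' s).indicator (fun _ => (1 : ℝ)))
        refine (condExp_congr_ae ?_).trans (this.trans ?_)
        · filter_upwards with ω; simp [smul_eq_mul]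
        · filter_upwards with ω; simp [smul_eq_mul]
      calc ∫ ω, (c * (x ⁻¹' s).indicator (fun _ => (1 : ℝ)) ω) * e ω ∂μ
          = c * ∫ ω, (x ⁻¹' s).indicator (fun _ => (1 : ℝ)) ω * e ω ∂μ := by
            rw [← integral_const_mul]; congr 1; funext ω; ring
        _ = c * ∫ ω, (μ[(x ⁻¹' s).indicator (fun _ => (1 : ℝ))|m']) ω * e ω ∂μ := by
            rw [step1 μ hx hy hCI hs ht]
        _ = ∫ ω, (c * (μ[(x ⁻¹' s).indicator (fun _ => (1 : ℝ))|m']) ω) * e ω ∂μ := by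
            rw [← integral_const_mul]; congr 1; funext ω; ring
        _ = ∫ ω, (μ[fun ω => c * (x ⁻¹' s).indicator (fun _ => (1 : ℝ)) ω|m']) ω * e ω ∂μ := by
            apply integral_congr_ae
            filter_upwards [hce] with ω hω; rw [hω]
  | @add φ ψ hdisj ihφ ihψ =>
      obtain ⟨Cφ, hCφ⟩ := φ.exists_forall_norm_le
      obtain ⟨Cψ, hCψ⟩ := ψ.exists_forall_norm_le
      have hφint : Integrable (fun ω => φ (x ω)) μ :=
        integrable_of_bound' μ (φ.measurable.comp hx) Cφ
          (fun ω => by simpa [Real.norm_eq_abs] using hCφ (x ω))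
      have hψint : Integrable (fun ω => ψ (x ω)) μ :=
        integrable_of_bound' μ (ψ.measurable.comp hx) Cψ
          (fun ω => by simpa [Real.norm_eq_abs] using hCψ (x ω))
      have hsum : ∀ ω, (φ + ψ) (x ω) = φ (x ω) + ψ (x ω) := by intro ω; simp
      have hsum2 : (fun ω => (φ + ψ) (x ω)) = fun ω => φ (x ω) + ψ (x ω) := funext hsum
      simp only [hsum, hsum2]
      have hce : μ[fun ω => φ (x ω) + ψ (x ω)|m']
          =ᵐ[μ] μ[fun ω => φ (x ω)|m'] + μ[fun ω => ψ (x ω)|m'] :=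
        condExp_add hφint hψint _
      calc ∫ ω, (φ (x ω) + ψ (x ω)) * e ω ∂μ
          = ∫ ω, (φ (x ω) * e ω + ψ (x ω) * e ω) ∂μ := by
            congr 1; funext ω; ring
        _ = (∫ ω, φ (x ω) * e ω ∂μ) + ∫ ω, ψ (x ω) * e ω ∂μ :=
            integral_add (int_mul_bdd μ hφint hmeas1 hb1) (int_mul_bdd μ hψint hmeas1 hb1)
        _ = (∫ ω, (μ[fun ω => φ (x ω)|m']) ω * e ω ∂μ)
              + ∫ ω, (μ[fun ω => ψ (x ω)|m']) ω * e ω ∂μ := by rw [ihφ, ihψ]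
        _ = ∫ ω, ((μ[fun ω => φ (x ω)|m']) ω * e ω
              + (μ[fun ω => ψ (x ω)|m']) ω * e ω) ∂μ :=
            (integral_add (int_mul_bdd μ integrable_condExp hmeas1 hb1)
              (int_mul_bdd μ integrable_condExp hmeas1 hb1)).symm
        _ = ∫ ω, (μ[fun ω => φ (x ω) + ψ (x ω)|m']) ω * e ω ∂μ := by
            apply integral_congr_ae
            filter_upwards [hce] with ω hω
            rw [hω]; simp [add_mul]

/-- Step 3: integrable function of `x` × indicator of `y`. -/
private lemma step3 (hx : Measurable x) (hy : Measurable y)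
    (hCI : CondIndepFun m' hm' y x μ)
    {q : α → ℝ} (hq : Measurable q) (hqint : Integrable (fun ω => q (x ω)) μ)
    {t : Set β} (ht : MeasurableSet t) :
    ∫ ω, q (x ω) * (y ⁻¹' t).indicator (fun _ => (1 : ℝ)) ω ∂μ
      = ∫ ω, (μ[fun ω => q (x ω)|m']) ω * (y ⁻¹' t).indicator (fun _ => (1 : ℝ)) ω ∂μ := by
  have hBt : MeasurableSet (y ⁻¹' t) := hy ht
  set e : Ω → ℝ := (y ⁻¹' t).indicator (fun _ => (1 : ℝ)) with he_def
  have hb1 : ∀ ω, |e ω| ≤ 1 := by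
    intro ω; by_cases h : ω ∈ y ⁻¹' t <;> simp [he_def, Set.indicator_apply, h]
  have hmeas1 : Measurable e := measurable_const.indicator hBt
  set φn : ℕ → SimpleFunc α ℝ :=
    fun n => SimpleFunc.approxOn q hq Set.univ 0 (Set.mem_univ 0) n with hφn_def
  have htend : ∀ a, Tendsto (fun n => φn n a) atTop (𝓝 (q a)) := fun a =>
    SimpleFunc.tendsto_approxOn hq _ (by simp)
  have hbd : ∀ n a, |φn n a| ≤ |q a| + |q a| := fun n a => by
    simpa [Real.norm_eq_abs] using SimpleFunc.norm_approxOn_zero_le hq (Set.mem_univ 0) a n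
  have hbint : Integrable (fun ω => |q (x ω)| + |q (x ω)|) μ := hqint.abs.add hqint.abs
  have hds : ∀ n, Integrable (fun ω => φn n (x ω)) μ := fun n =>
    Integrable.mono' hbint ((φn n).measurable.comp hx).aestronglyMeasurable
      (Eventually.of_forall fun ω => by simpa [Real.norm_eq_abs] using hbd n (x ω))
  have hL : Tendsto (fun n => ∫ ω, φn n (x ω) * e ω ∂μ) atTop
      (𝓝 (∫ ω, q (x ω) * e ω ∂μ)) := by
    refine tendsto_integral_of_dominated_convergence
      (fun ω => |q (x ω)| + |q (x ω)|) ?_ hbint ?_ ?_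
    · exact fun n => (((φn n).measurable.comp hx).mul hmeas1).aestronglyMeasurable
    · intro n
      filter_upwards with ω
      calc ‖φn n (x ω) * e ω‖ = |φn n (x ω)| * |e ω| := by
            rw [Real.norm_eq_abs, abs_mul]
        _ ≤ (|q (x ω)| + |q (x ω)|) * 1 :=
            mul_le_mul (hbd n (x ω)) (hb1 ω) (abs_nonneg _)
              (by positivity)
        _ = |q (x ω)| + |q (x ω)| := mul_one _
    · filter_upwards with ω
      exact (htend (x ω)).mul tendsto_const_nhds
  have hRdiff : Tendsto (fun n => ∫ ω, |φn n (x ω) - q (x ω)| ∂μ) atTop (𝓝 0) := by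
    have h0 : Tendsto (fun n => ∫ ω, |φn n (x ω) - q (x ω)| ∂μ) atTop
        (𝓝 (∫ ω, |q (x ω) - q (x ω)| ∂μ)) := by
      refine tendsto_integral_of_dominated_convergence
        (fun ω => (|q (x ω)| + |q (x ω)|) + |q (x ω)|) ?_ (hbint.add hqint.abs) ?_ ?_
      · exact fun n =>
          ((((φn n).measurable.comp hx).sub (hq.comp hx)).abs).aestronglyMeasurable
      · intro n
        filter_upwards with ω
        rw [Real.norm_eq_abs, abs_abs]
        calc |φn n (x ω) - q (x ω)| ≤ |φn n (x ω)| + |q (x ω)| := abs_sub _ _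
          _ ≤ (|q (x ω)| + |q (x ω)|) + |q (x ω)| := by
              have := hbd n (x ω); linarith
      · filter_upwards with ω
        exact ((htend (x ω)).sub tendsto_const_nhds).abs
    simpa using h0
  have hRbound : ∀ n,
      |(∫ ω, (μ[fun ω => φn n (x ω)|m']) ω * e ω ∂μ)
        - ∫ ω, (μ[fun ω => q (x ω)|m']) ω * e ω ∂μ|
      ≤ ∫ ω, |φn n (x ω) - q (x ω)| ∂μ := by
    intro n
    have hint1 : Integrable (fun ω => (μ[fun ω => φn n (x ω)|m']) ω * e ω) μ :=
      int_mul_bdd μ integrable_condExp hmeas1 hb1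
    have hint2 : Integrable (fun ω => (μ[fun ω => q (x ω)|m']) ω * e ω) μ :=
      int_mul_bdd μ integrable_condExp hmeas1 hb1
    have hsub : (∫ ω, (μ[fun ω => φn n (x ω)|m']) ω * e ω ∂μ)
        - ∫ ω, (μ[fun ω => q (x ω)|m']) ω * e ω ∂μ
        = ∫ ω, ((μ[fun ω => φn n (x ω)|m']) ω - (μ[fun ω => q (x ω)|m']) ω) * e ω ∂μ := by
      rw [← integral_sub hint1 hint2]; congr 1; funext ω; ring
    rw [hsub]
    have habs : |∫ ω, ((μ[fun ω => φn n (x ω)|m']) ω - (μ[fun ω => q (x ω)|m']) ω) * e ω ∂μ|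
        ≤ ∫ ω, |(μ[fun ω => φn n (x ω)|m']) ω - (μ[fun ω => q (x ω)|m']) ω| ∂μ := by
      calc |∫ ω, ((μ[fun ω => φn n (x ω)|m']) ω - (μ[fun ω => q (x ω)|m']) ω) * e ω ∂μ|
          ≤ ∫ ω, |((μ[fun ω => φn n (x ω)|m']) ω - (μ[fun ω => q (x ω)|m']) ω) * e ω| ∂μ := by
            simpa only [Real.norm_eq_abs] using
              norm_integral_le_integral_norm (μ := μ)
                (fun ω => ((μ[fun ω => φn n (x ω)|m']) ω - (μ[fun ω => q (x ω)|m']) ω) * e ω)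
        _ ≤ ∫ ω, |(μ[fun ω => φn n (x ω)|m']) ω - (μ[fun ω => q (x ω)|m']) ω| ∂μ := by
            have hint3 : Integrable
                (fun ω => |((μ[fun ω => φn n (x ω)|m']) ω - (μ[fun ω => q (x ω)|m']) ω) * e ω|)
                μ := by
              refine (hint1.sub hint2).abs.congr (Eventually.of_forall fun ω => ?_)
              simp only [Pi.sub_apply]; congr 1; ring
            have hint4 : Integrable
                (fun ω => |(μ[fun ω => φn n (x ω)|m']) ω - (μ[fun ω => q (x ω)|m']) ω|) μ := by
              refine ((integrable_condExp (f := fun ω => φn n (x ω)) (m := m') (μ := μ)).sub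
                (integrable_condExp (f := fun ω => q (x ω)) (m := m'))).abs.congr
                (Eventually.of_forall fun ω => ?_)
              simp only [Pi.sub_apply]
            refine integral_mono hint3 hint4 ?_
            intro ω
            dsimp only
            rw [abs_mul]
            calc |(μ[fun ω => φn n (x ω)|m']) ω - (μ[fun ω => q (x ω)|m']) ω| * |e ω|
                ≤ |(μ[fun ω => φn n (x ω)|m']) ω - (μ[fun ω => q (x ω)|m']) ω| * 1 :=
                  mul_le_mul_of_nonneg_left (hb1 ω) (abs_nonneg _)
              _ = _ := mul_one _
    refine habs.trans ?_
    have hce : (fun ω => (μ[fun ω => φn n (x ω)|m']) ω - (μ[fun ω => q (x ω)|m']) ω)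
        =ᵐ[μ] μ[(fun ω => φn n (x ω)) - fun ω => q (x ω)|m'] :=
      (condExp_sub (hds n) hqint _).symm
    have heq : ∫ ω, |(μ[fun ω => φn n (x ω)|m']) ω - (μ[fun ω => q (x ω)|m']) ω| ∂μ
        = ∫ ω, |(μ[(fun ω => φn n (x ω)) - fun ω => q (x ω)|m']) ω| ∂μ := by
      apply integral_congr_ae
      filter_upwards [hce] with ω hω
      rw [hω]
    rw [heq]
    have := integral_abs_condExp_le (μ := μ) (m := m')
      ((fun ω => φn n (x ω)) - fun ω => q (x ω))
    simpa using this
  have hR : Tendsto (fun n => ∫ ω, (μ[fun ω => φn n (x ω)|m']) ω * e ω ∂μ) atTop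
      (𝓝 (∫ ω, (μ[fun ω => q (x ω)|m']) ω * e ω ∂μ)) := by
    rw [← tendsto_sub_nhds_zero_iff]
    refine squeeze_zero_norm (fun n => ?_) hRdiff
    simpa [Real.norm_eq_abs] using hRbound n
  have hseq : (fun n => ∫ ω, φn n (x ω) * e ω ∂μ)
      = fun n => ∫ ω, (μ[fun ω => φn n (x ω)|m']) ω * e ω ∂μ :=
    funext fun n => step2 μ hx hy hCI (φn n) ht
  rw [hseq] at hL
  exact tendsto_nhds_unique hL hR

/-- Steps 4–5: from vanishing against indicators of `y` to vanishing against bounded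
measurable functions of `y`. -/
private lemma step45 (hy : Measurable y) {w : Ω → ℝ} (hw : Integrable w μ)
    (hw0 : ∀ t : Set β, MeasurableSet t →
      ∫ ω, w ω * (y ⁻¹' t).indicator (fun _ => (1 : ℝ)) ω ∂μ = 0)
    {f : β → ℝ} (hf : Measurable f) {C : ℝ} (hC : ∀ r, |f r| ≤ C) :
    ∫ ω, w ω * f (y ω) ∂μ = 0 := by
  have hsimple : ∀ ψ : SimpleFunc β ℝ, ∫ ω, w ω * ψ (y ω) ∂μ = 0 := by
    intro ψ
    induction ψ using SimpleFunc.induction with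
    | @const c s hs =>
        have hcoe : ∀ ω, (SimpleFunc.piecewise s hs (SimpleFunc.const β c)
            (SimpleFunc.const β 0)) (y ω)
            = c * (y ⁻¹' s).indicator (fun _ => (1 : ℝ)) ω := by
          intro ω; by_cases h : y ω ∈ s <;>
            simp [SimpleFunc.piecewise_apply, Set.indicator_apply, h]
        simp only [hcoe]
        have : (fun ω => w ω * (c * (y ⁻¹' s).indicator (fun _ => (1 : ℝ)) ω))
            = fun ω => c * (w ω * (y ⁻¹' s).indicator (fun _ => (1 : ℝ)) ω) := by
          funext ω; ring
        rw [this, integral_const_mul, hw0 s hs, mul_zero]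
    | @add φ ψ hdisj ihφ ihψ =>
        obtain ⟨Cφ, hCφ⟩ := φ.exists_forall_norm_le
        obtain ⟨Cψ, hCψ⟩ := ψ.exists_forall_norm_le
        have hsum : ∀ ω, (φ + ψ) (y ω) = φ (y ω) + ψ (y ω) := by intro ω; simp
        simp only [hsum]
        have hφi : Integrable (fun ω => w ω * φ (y ω)) μ :=
          int_mul_bdd μ hw (φ.measurable.comp hy)
            (fun ω => by simpa [Real.norm_eq_abs] using hCφ (y ω))
        have hψi : Integrable (fun ω => w ω * ψ (y ω)) μ :=
          int_mul_bdd μ hw (ψ.measurable.comp hy)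
            (fun ω => by simpa [Real.norm_eq_abs] using hCψ (y ω))
        have : (fun ω => w ω * (φ (y ω) + ψ (y ω)))
            = fun ω => w ω * φ (y ω) + w ω * ψ (y ω) := by funext ω; ring
        rw [this, integral_add hφi hψi, ihφ, ihψ, add_zero]
  set ψn : ℕ → SimpleFunc β ℝ :=
    fun n => SimpleFunc.approxOn f hf Set.univ 0 (Set.mem_univ 0) n with hψn_def
  have htend : ∀ r, Tendsto (fun n => ψn n r) atTop (𝓝 (f r)) := fun r =>
    SimpleFunc.tendsto_approxOn hf _ (by simp)
  have hbd : ∀ n r, |ψn n r| ≤ |f r| + |f r| := fun n r => by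
    simpa [Real.norm_eq_abs] using SimpleFunc.norm_approxOn_zero_le hf (Set.mem_univ 0) r n
  have hlim : Tendsto (fun n => ∫ ω, w ω * ψn n (y ω) ∂μ) atTop
      (𝓝 (∫ ω, w ω * f (y ω) ∂μ)) := by
    refine tendsto_integral_of_dominated_convergence
      (fun ω => |w ω| * (C + C)) ?_ (hw.abs.mul_const _) ?_ ?_
    · exact fun n => hw.aestronglyMeasurable.mul
        ((ψn n).measurable.comp hy).aestronglyMeasurable
    · intro n
      filter_upwards with ω
      rw [Real.norm_eq_abs, abs_mul]
      refine mul_le_mul_of_nonneg_left ?_ (abs_nonneg _)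
      calc |ψn n (y ω)| ≤ |f (y ω)| + |f (y ω)| := hbd n (y ω)
        _ ≤ C + C := add_le_add (hC _) (hC _)
    · filter_upwards with ω
      exact tendsto_const_nhds.mul (htend (y ω))
  have hzero : Tendsto (fun n => ∫ ω, w ω * ψn n (y ω) ∂μ) atTop (𝓝 (0 : ℝ)) := by
    have : (fun n => ∫ ω, w ω * ψn n (y ω) ∂μ) = fun _ => (0 : ℝ) :=
      funext fun n => hsimple (ψn n)
    rw [this]
    exact tendsto_const_nhds
  exact tendsto_nhds_unique hlim hzero

/-- The fixed-point identity for the vector of slice coefficients. -/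
private lemma main_aux {p : ℕ} {x : Ω → Fin p → ℝ} {y : Ω → ℝ}
    (hx : Measurable x) (hy : Measurable y)
    (hCI : CondIndepFun m' hm' y x μ)
    (hL1 : ∀ j, Integrable (fun ω => x ω j) μ)
    (P : Matrix (Fin p) (Fin p) ℝ)
    (hlin : ∀ j, μ[(fun ω => x ω j)|m'] =ᵐ[μ] fun ω => P.mulVec (x ω) j)
    {f : ℝ → ℝ} (hf : Measurable f) {C : ℝ} (hC : ∀ r, |f r| ≤ C) :
    (fun j => ∫ ω, x ω j * f (y ω) ∂μ)
      = P.mulVec (fun j => ∫ ω, x ω j * f (y ω) ∂μ) := by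
  have hPexp : ∀ j, (fun ω => P.mulVec (x ω) j) = fun ω => ∑ k, P j k * x ω k := by
    intro j; funext ω; simp [Matrix.mulVec, dotProduct]
  have hPint : ∀ j, Integrable (fun ω => P.mulVec (x ω) j) μ := by
    intro j
    rw [hPexp j]
    exact integrable_finset_sum _ (fun k _ => (hL1 k).const_mul _)
  funext j
  have hq : Measurable (fun u : Fin p → ℝ => u j) := measurable_pi_apply j
  have hw0 : ∀ t : Set ℝ, MeasurableSet t →
      ∫ ω, (x ω j - P.mulVec (x ω) j) * (y ⁻¹' t).indicator (fun _ => (1 : ℝ)) ω ∂μ = 0 := by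
    intro t ht
    have hmeas1 : Measurable ((y ⁻¹' t).indicator (fun _ => (1 : ℝ))) :=
      measurable_const.indicator (hy ht)
    have hb1 : ∀ ω, |(y ⁻¹' t).indicator (fun _ => (1 : ℝ)) ω| ≤ 1 := by
      intro ω; by_cases h : ω ∈ y ⁻¹' t <;> simp [Set.indicator_apply, h]
    have h1 := step3 μ hx hy hCI hq (hL1 j) ht
    have h2 : ∫ ω, (μ[fun ω => x ω j|m']) ω * (y ⁻¹' t).indicator (fun _ => (1 : ℝ)) ω ∂μ
        = ∫ ω, P.mulVec (x ω) j * (y ⁻¹' t).indicator (fun _ => (1 : ℝ)) ω ∂μ := by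
      apply integral_congr_ae
      filter_upwards [hlin j] with ω hω
      rw [hω]
    have hdiff : (fun ω => (x ω j - P.mulVec (x ω) j)
          * (y ⁻¹' t).indicator (fun _ => (1 : ℝ)) ω)
        = fun ω => x ω j * (y ⁻¹' t).indicator (fun _ => (1 : ℝ)) ω
            - P.mulVec (x ω) j * (y ⁻¹' t).indicator (fun _ => (1 : ℝ)) ω := by
      funext ω; ring
    rw [hdiff, integral_sub (int_mul_bdd μ (hL1 j) hmeas1 hb1)
      (int_mul_bdd μ (hPint j) hmeas1 hb1)]
    have h1' : ∫ ω, x ω j * (y ⁻¹' t).indicator (fun _ => (1 : ℝ)) ω ∂μ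
        = ∫ ω, (μ[fun ω => x ω j|m']) ω * (y ⁻¹' t).indicator (fun _ => (1 : ℝ)) ω ∂μ := h1
    rw [h1', h2, sub_self]
  have key := step45 μ hy (w := fun ω => x ω j - P.mulVec (x ω) j)
    ((hL1 j).sub (hPint j)) hw0 hf hC
  have hXf : Integrable (fun ω => x ω j * f (y ω)) μ :=
    int_mul_bdd μ (hL1 j) (hf.comp hy) (fun ω => hC _)
  have hPf : Integrable (fun ω => P.mulVec (x ω) j * f (y ω)) μ :=
    int_mul_bdd μ (hPint j) (hf.comp hy) (fun ω => hC _)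
  have hmain : ∫ ω, x ω j * f (y ω) ∂μ = ∫ ω, P.mulVec (x ω) j * f (y ω) ∂μ := by
    have hsub : (fun ω => (x ω j - P.mulVec (x ω) j) * f (y ω))
        = fun ω => x ω j * f (y ω) - P.mulVec (x ω) j * f (y ω) := by
      funext ω; ring
    rw [hsub, integral_sub hXf hPf] at key
    linarith
  rw [hmain]
  have hexp2 : (fun ω => P.mulVec (x ω) j * f (y ω))
      = fun ω => ∑ k, P j k * (x ω k * f (y ω)) := by
    funext ω; simp [Matrix.mulVec, dotProduct, Finset.sum_mul, mul_assoc]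
  have hsum := integral_finset_sum (μ := μ) Finset.univ
    (f := fun (k : Fin p) (ω : Ω) => P j k * (x ω k * f (y ω)))
    (fun k _ => (int_mul_bdd μ (hL1 k) (hf.comp hy) (fun ω => hC _)).const_mul _)
  rw [hexp2, hsum]
  simp [Matrix.mulVec, dotProduct, integral_const_mul]

end AuxCI




/-- **Population slice coefficients lie in the central subspace under the linearity
condition.**  If `x` is centered with invertible covariance `Σ`, `y ⫫ x ∣ Bᵀx`, and the
linearity condition `E[x | Bᵀx] = Σ B (BᵀΣB)⁻¹ Bᵀ x` holds a.s., then for every bounded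
measurable `f : ℝ → ℝ`, the vector `Σ⁻¹ E[x f(y)]` lies in the column space of `B`. -/
theorem stmt_11
    {Ω : Type*} [MeasurableSpace Ω] [StandardBorelSpace Ω]
    (μ : Measure Ω) [IsProbabilityMeasure μ]
    {p d : ℕ}
    (x : Ω → Fin p → ℝ) (hx : Measurable x)
    (y : Ω → ℝ) (hy : Measurable y)
    (hL2 : ∀ j, MemLp (fun ω => x ω j) 2 μ)
    (hcentered : ∀ j, ∫ ω, x ω j ∂μ = 0)
    (Sg : Matrix (Fin p) (Fin p) ℝ)
    (hSg : ∀ j k, Sg j k = ∫ ω, x ω j * x ω k ∂μ)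
    (hSginv : IsUnit Sg.det)
    (B : Matrix (Fin p) (Fin d) ℝ)
    (hBinv : IsUnit (Bᵀ * Sg * B).det)
    (hm : Measurable (fun ω => Bᵀ.mulVec (x ω)))
    (hCI : CondIndepFun
        (MeasurableSpace.comap (fun ω => Bᵀ.mulVec (x ω)) inferInstance)
        hm.comap_le y x μ)
    (hlin : ∀ j,
      μ[(fun ω => x ω j) |
          MeasurableSpace.comap (fun ω => Bᵀ.mulVec (x ω)) inferInstance]
        =ᵐ[μ] fun ω => (Sg * B * (Bᵀ * Sg * B)⁻¹ * Bᵀ).mulVec (x ω) j) :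
    ∀ f : ℝ → ℝ, Measurable f → (∃ Cf : ℝ, ∀ r, |f r| ≤ Cf) →
      ∃ c : Fin d → ℝ,
        Sg⁻¹.mulVec (fun j => ∫ ω, x ω j * f (y ω) ∂μ) = B.mulVec c := by
  intro f hf hCf
  obtain ⟨Cf, hC⟩ := hCf
  have hL1 : ∀ j, Integrable (fun ω => x ω j) μ := fun j =>
    (hL2 j).integrable one_le_two
  have hfix := main_aux μ hx hy hCI hL1 (Sg * B * (Bᵀ * Sg * B)⁻¹ * Bᵀ) hlin hf hC
  set v : Fin p → ℝ := fun j => ∫ ω, x ω j * f (y ω) ∂μ with hv_def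
  refine ⟨((Bᵀ * Sg * B)⁻¹ * Bᵀ).mulVec v, ?_⟩
  have halg : Sg⁻¹ * (Sg * B * (Bᵀ * Sg * B)⁻¹ * Bᵀ) = B * ((Bᵀ * Sg * B)⁻¹ * Bᵀ) := by
    simp only [← Matrix.mul_assoc]
    rw [Matrix.nonsing_inv_mul Sg hSginv, Matrix.one_mul]
  calc Sg⁻¹.mulVec v
      = Sg⁻¹.mulVec ((Sg * B * (Bᵀ * Sg * B)⁻¹ * Bᵀ).mulVec v) := by
        conv_lhs => rw [hfix]
    _ = (Sg⁻¹ * (Sg * B * (Bᵀ * Sg * B)⁻¹ * Bᵀ)).mulVec v := Matrix.mulVec_mulVec v _ _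
    _ = (B * ((Bᵀ * Sg * B)⁻¹ * Bᵀ)).mulVec v := by rw [halg]
    _ = B.mulVec (((Bᵀ * Sg * B)⁻¹ * Bᵀ).mulVec v) := (Matrix.mulVec_mulVec v _ _).symm
end
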